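/- Let H be a finite-dimensional complex Hilbert space of dimension at least 2. Then there is no expectation representation for quantum systems described by H: no triple (Λ, μ, F) with Λ a measurable space, μ convex-linear from density operators on H to probability measures on Λ, and F mapping rank-1 projections to measurable functions Λ → [0,1], satisfying Tr(ρE) = ∫_Λ F(E) dμ(ρ) for all density operators ρ and rank-1 projections E. -/

import Mathlib

open MeasureTheory

variable {H : Type*} [NormedAddCommGroup H] [InnerProductSpace ℂ H]

/-- Self-adjointness of an operator, stated via the inner product. -/
def IsSelfAdjointOp (T : H →L[ℂ] H) : Prop :=
  ∀ x y : H, inner ℂ (T x) y = (inner ℂ x (T y) : ℂ)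

/-- A density operator: positive semidefinite Hermitian with trace 1. -/
def IsDensityOp (T : H →L[ℂ] H) : Prop :=
  IsSelfAdjointOp T ∧ (∀ x : H, 0 ≤ (inner ℂ (T x) x : ℂ).re) ∧
    LinearMap.trace ℂ H (T : H →ₗ[ℂ] H) = 1

/-- A rank-1 projection: Hermitian idempotent of rank 1. -/
def IsRankOneProjOp (T : H →L[ℂ] H) : Prop :=
  IsSelfAdjointOp T ∧ T ∘L T = T ∧ LinearMap.rank (T : H →ₗ[ℂ] H) = 1

open scoped InnerProductSpace ComplexConjugate ENNReal

section AuxAlg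

/-- The rank one operator `x ↦ ⟪v, x⟫ • w`. -/
noncomputable def rkOne (v w : H) : H →L[ℂ] H := (innerSL ℂ v).smulRight w

lemma rkOne_apply (v w x : H) : rkOne v w x = ⟪v, x⟫_ℂ • w := rfl

lemma selfAdjoint_rkOne (u : H) : IsSelfAdjointOp (rkOne u u) := by
  intro x y
  rw [rkOne_apply, rkOne_apply, inner_smul_left, inner_smul_right, ← inner_conj_symm x u]
  ring

lemma rank_rkOne (u : H) (hu : ⟪u, u⟫_ℂ = 1) :
    LinearMap.rank ((rkOne u u : H →L[ℂ] H) : H →ₗ[ℂ] H) = 1 := by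
  have hu0 : u ≠ 0 := by
    intro h; rw [h, inner_zero_left] at hu; exact zero_ne_one hu
  have humem : u ∈ LinearMap.range ((rkOne u u : H →L[ℂ] H) : H →ₗ[ℂ] H) := by
    refine ⟨u, ?_⟩
    show rkOne u u u = u
    rw [rkOne_apply, hu, one_smul]
  refine rank_eq_one (⟨u, humem⟩ : LinearMap.range _) ?_ ?_
  · intro h
    exact hu0 (congrArg Subtype.val h)
  · rintro ⟨w, ⟨x, rfl⟩⟩
    refine ⟨⟪u, x⟫_ℂ, ?_⟩
    ext
    show ⟪u, x⟫_ℂ • u = rkOne u u x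
    rw [rkOne_apply]

lemma rkOne_comp (v w v' w' : H) :
    rkOne v w ∘L rkOne v' w' = rkOne v' ((⟪v, w'⟫_ℂ) • w) := by
  ext x
  simp [rkOne_apply, inner_smul_right, smul_smul, mul_comm]

lemma isRankOneProj_rkOne (u : H) (hu : ⟪u, u⟫_ℂ = 1) :
    IsRankOneProjOp (rkOne u u) := by
  refine ⟨selfAdjoint_rkOne u, ?_, rank_rkOne u hu⟩
  rw [rkOne_comp, hu, one_smul]

lemma trace_rkOne [FiniteDimensional ℂ H] (v w : H) :
    LinearMap.trace ℂ H ((rkOne v w : H →L[ℂ] H) : H →ₗ[ℂ] H) = ⟪v, w⟫_ℂ := by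
  classical
  set b := stdOrthonormalBasis ℂ H
  rw [LinearMap.trace_eq_matrix_trace ℂ b.toBasis, Matrix.trace]
  have : ∀ i, (LinearMap.toMatrix b.toBasis b.toBasis
      ((rkOne v w : H →L[ℂ] H) : H →ₗ[ℂ] H)).diag i = ⟪v, b i⟫_ℂ * ⟪b i, w⟫_ℂ := by
    intro i
    simp [Matrix.diag, LinearMap.toMatrix_apply, OrthonormalBasis.coe_toBasis,
      OrthonormalBasis.coe_toBasis_repr_apply, OrthonormalBasis.repr_apply_apply,
      rkOne_apply, inner_smul_right, mul_comm]
  simp_rw [this]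
  exact b.sum_inner_mul_inner v w

lemma isDensity_rkOne [FiniteDimensional ℂ H] (u : H) (hu : ⟪u, u⟫_ℂ = 1) :
    IsDensityOp (rkOne u u) := by
  refine ⟨selfAdjoint_rkOne u, ?_, by rw [trace_rkOne, hu]⟩
  intro x
  rw [rkOne_apply, inner_smul_left]
  rw [← Complex.normSq_eq_conj_mul_self, Complex.ofReal_re]
  exact Complex.normSq_nonneg _

end AuxAlg

section AuxMeas

variable {Λ : Type} [MeasurableSpace Λ]

lemma helper_integrable (ν : Measure Λ) [IsProbabilityMeasure ν] (f : Λ → ℝ)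
    (hm : Measurable f) (h01 : ∀ l, f l ∈ Set.Icc (0:ℝ) 1) : Integrable f ν := by
  refine Integrable.mono' (integrable_const 1) hm.aestronglyMeasurable ?_
  refine Filter.Eventually.of_forall fun l => ?_
  rw [Real.norm_eq_abs, abs_of_nonneg (h01 l).1]
  exact (h01 l).2

lemma helper_markov (ν : Measure Λ) [IsProbabilityMeasure ν] (f : Λ → ℝ)
    (hm : Measurable f) (h01 : ∀ l, f l ∈ Set.Icc (0:ℝ) 1) :
    ν {l | 1 ≤ f l} ≤ ENNReal.ofReal (∫ l, f l ∂ν) := by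
  have hint := helper_integrable ν f hm h01
  have h := mul_meas_ge_le_integral_of_nonneg
    (Filter.Eventually.of_forall fun l => (h01 l).1) hint 1
  rw [one_mul] at h
  calc ν {l | 1 ≤ f l} = ENNReal.ofReal ((ν {l | 1 ≤ f l}).toReal) :=
        (ENNReal.ofReal_toReal (measure_ne_top ν _)).symm
    _ ≤ ENNReal.ofReal (∫ l, f l ∂ν) := ENNReal.ofReal_le_ofReal h

lemma helper_full (ν : Measure Λ) [IsProbabilityMeasure ν] (f : Λ → ℝ)
    (hm : Measurable f) (h01 : ∀ l, f l ∈ Set.Icc (0:ℝ) 1)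
    (hint1 : ∫ l, f l ∂ν = 1) :
    ν ({l | 1 ≤ f l}ᶜ) = 0 := by
  have hint := helper_integrable ν f hm h01
  have hae : (fun l => (1:ℝ) - f l) =ᵐ[ν] 0 := by
    rw [← integral_eq_zero_iff_of_nonneg_ae
      (Filter.Eventually.of_forall fun l => sub_nonneg.mpr (h01 l).2)
      ((integrable_const 1).sub hint)]
    rw [integral_sub (integrable_const 1) hint, hint1]
    simp
  have hnull : ν {l | ¬ ((1:ℝ) - f l = 0)} = 0 := by
    simpa [Filter.EventuallyEq, ae_iff] using hae
  refine measure_mono_null ?_ hnull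
  intro l hl
  simp only [Set.mem_compl_iff, Set.mem_setOf_eq] at hl ⊢
  intro h
  exact hl (by linarith)

end AuxMeas

/-- If `dim H ≥ 2`, there is no expectation representation for quantum systems
described by the finite-dimensional complex Hilbert space `H`. -/
theorem no_expectation_representation_of_two_le_dim
    [FiniteDimensional ℂ H] (hdim : 2 ≤ Module.finrank ℂ H) :
    ¬ ∃ (Λ : Type) (_ : MeasurableSpace Λ)
        (μ : (H →L[ℂ] H) → Measure Λ)
        (F : (H →L[ℂ] H) → Λ → ℝ),
      (∀ ρ, IsDensityOp ρ → IsProbabilityMeasure (μ ρ)) ∧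
      (∀ (p₁ p₂ : ℝ) (ρ₁ ρ₂ : H →L[ℂ] H),
        0 ≤ p₁ → 0 ≤ p₂ → p₁ + p₂ = 1 → IsDensityOp ρ₁ → IsDensityOp ρ₂ →
        μ ((p₁ : ℂ) • ρ₁ + (p₂ : ℂ) • ρ₂)
          = ENNReal.ofReal p₁ • μ ρ₁ + ENNReal.ofReal p₂ • μ ρ₂) ∧
      (∀ E, IsRankOneProjOp E → Measurable (F E)) ∧
      (∀ E, IsRankOneProjOp E → ∀ l, F E l ∈ Set.Icc (0 : ℝ) 1) ∧
      (∀ ρ E, IsDensityOp ρ → IsRankOneProjOp E →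
        LinearMap.trace ℂ H ((ρ ∘L E : H →L[ℂ] H) : H →ₗ[ℂ] H)
          = ((∫ l, F E l ∂(μ ρ) : ℝ) : ℂ)) := by
  rintro ⟨Λ, mΛ, μ, F, hprob, hconv, hmeas, h01, htr⟩
  classical
  -- two orthonormal vectors
  set b := stdOrthonormalBasis ℂ H with hb
  have hcard : 2 ≤ Module.finrank ℂ H := hdim
  set i0 : Fin (Module.finrank ℂ H) := ⟨0, by omega⟩ with hi0
  set i1 : Fin (Module.finrank ℂ H) := ⟨1, by omega⟩ with hi1
  set e₁ : H := b i0 with he₁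
  set e₂ : H := b i1 with he₂
  have horth := orthonormal_iff_ite.mp b.orthonormal
  have hne : i0 ≠ i1 := by
    intro h
    simpa [hi0, hi1] using congrArg Fin.val h
  have h11 : ⟪e₁, e₁⟫_ℂ = 1 := by have := horth i0 i0; rw [if_pos rfl] at this; exact this
  have h22 : ⟪e₂, e₂⟫_ℂ = 1 := by have := horth i1 i1; rw [if_pos rfl] at this; exact this
  have h12 : ⟪e₁, e₂⟫_ℂ = 0 := by have := horth i0 i1; rw [if_neg hne] at this; exact this
  have h21 : ⟪e₂, e₁⟫_ℂ = 0 := by have := horth i1 i0; rw [if_neg hne.symm] at this; exact this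
  -- family of unit vectors and projections
  set u : ℝ → H := fun θ => (Real.cos θ : ℂ) • e₁ + (Real.sin θ : ℂ) • e₂ with hu_def
  have hinner : ∀ θ φ : ℝ, ⟪u θ, u φ⟫_ℂ = (Real.cos (θ - φ) : ℂ) := by
    intro θ φ
    simp only [hu_def, inner_add_left, inner_add_right, inner_smul_left, inner_smul_right,
      h11, h22, h12, h21, Complex.conj_ofReal, mul_zero, mul_one, add_zero, zero_add]
    rw [Real.cos_sub]
    push_cast
    ring
  have hunit : ∀ θ : ℝ, ⟪u θ, u θ⟫_ℂ = 1 := by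
    intro θ; rw [hinner, sub_self, Real.cos_zero, Complex.ofReal_one]
  set E : ℝ → (H →L[ℂ] H) := fun θ => rkOne (u θ) (u θ) with hE_def
  have hE : ∀ θ, IsRankOneProjOp (E θ) := fun θ => isRankOneProj_rkOne _ (hunit θ)
  have hD : ∀ θ, IsDensityOp (E θ) := fun θ => isDensity_rkOne _ (hunit θ)
  -- the integral formula
  have hIntF : ∀ θ φ : ℝ, ∫ l, F (E θ) l ∂(μ (E φ)) = (Real.cos (θ - φ))^2 := by
    intro θ φ
    have h := htr (E φ) (E θ) (hD φ) (hE θ)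
    rw [hE_def] at h
    simp only [rkOne_comp] at h
    rw [trace_rkOne, inner_smul_right, hinner, hinner] at h
    have : Real.cos (φ - θ) = Real.cos (θ - φ) := by
      rw [← Real.cos_neg, neg_sub]
    rw [this] at h
    apply Complex.ofReal_injective
    rw [Complex.ofReal_pow, sq]
    exact h.symm
  -- the mixed state
  set P : H →L[ℂ] H := rkOne e₁ e₁ + rkOne e₂ e₂ with hP_def
  set ρ₀ : H →L[ℂ] H := (((1:ℝ)/2 : ℝ) : ℂ) • P with hρ₀
  have hsum : ∀ θ : ℝ, (((1:ℝ)/2 : ℝ) : ℂ) • E θ + (((1:ℝ)/2 : ℝ) : ℂ) • E (θ + Real.pi/2) = ρ₀ := by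
    intro θ
    have hEP : E θ + E (θ + Real.pi/2) = P := by
      ext x
      have hcs : (Complex.cos θ)^2 + (Complex.sin θ)^2 = 1 := Complex.cos_sq_add_sin_sq θ
      simp only [hE_def, hu_def, hP_def, ContinuousLinearMap.add_apply, rkOne_apply,
        Real.cos_add_pi_div_two, Real.sin_add_pi_div_two, Complex.ofReal_neg,
        inner_add_left, inner_smul_left, Complex.conj_ofReal, neg_smul, smul_add, smul_smul,
        inner_neg_left, neg_neg, neg_mul, mul_neg]
      simp only [Complex.ofReal_cos, Complex.ofReal_sin]
      match_scalars
      · linear_combination ⟪e₁, x⟫_ℂ * hcs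
      · linear_combination ⟪e₂, x⟫_ℂ * hcs
    rw [← smul_add, hEP, hρ₀]

  -- convex-linearity
  have hν : ∀ θ : ℝ, μ ρ₀ = ENNReal.ofReal ((1:ℝ)/2) • μ (E θ)
      + ENNReal.ofReal ((1:ℝ)/2) • μ (E (θ + Real.pi/2)) := by
    intro θ
    rw [← hsum θ]
    exact hconv ((1:ℝ)/2) ((1:ℝ)/2) _ _ (by norm_num) (by norm_num) (by norm_num)
      (hD θ) (hD _)
  have hPμ : ∀ θ : ℝ, IsProbabilityMeasure (μ (E θ)) := fun θ => hprob _ (hD θ)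
  set A : ℝ → Set Λ := fun θ => {l | 1 ≤ F (E θ) l} with hA_def
  have hfull : ∀ θ : ℝ, μ (E θ) ((A θ)ᶜ) = 0 := by
    intro θ
    haveI := hPμ θ
    refine helper_full _ _ (hmeas _ (hE θ)) (h01 _ (hE θ)) ?_
    rw [hIntF θ θ, sub_self, Real.cos_zero, one_pow]
  have hmark : ∀ θ φ : ℝ, μ (E φ) (A θ) ≤ ENNReal.ofReal ((Real.cos (θ - φ))^2) := by
    intro θ φ
    haveI := hPμ φ
    refine (helper_markov _ _ (hmeas _ (hE θ)) (h01 _ (hE θ))).trans ?_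
    rw [hIntF θ φ]
  set π := Real.pi with hπ
  have cos23 : Real.cos (-(π - π/3)) ^ 2 = (1:ℝ)/4 := by
    rw [Real.cos_neg, Real.cos_pi_sub, Real.cos_pi_div_three]
    norm_num
  have q1 : μ (E 0) (A (π/3)) ≤ ENNReal.ofReal ((1:ℝ)/4) := by
    refine (hmark (π/3) 0).trans_eq ?_
    rw [sub_zero, Real.cos_pi_div_three]
    norm_num
  have q2 : μ (E (π/6 + π/2)) (A 0) ≤ ENNReal.ofReal ((1:ℝ)/4) := by
    refine (hmark 0 (π/6 + π/2)).trans_eq ?_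
    have h' : (0:ℝ) - (π/6 + π/2) = -(π - π/3) := by ring
    rw [h', cos23]
  have q3 : μ (E (π/3 + π/2)) (A (π/6)) ≤ ENNReal.ofReal ((1:ℝ)/4) := by
    refine (hmark (π/6) (π/3 + π/2)).trans_eq ?_
    have h' : π/6 - (π/3 + π/2) = -(π - π/3) := by ring
    rw [h', cos23]
  -- full measure of A 0 under μ (E 0)
  have h1 : (1:ℝ≥0∞) ≤ μ (E 0) (A 0) := by
    haveI := hPμ 0
    calc (1:ℝ≥0∞) = μ (E 0) Set.univ := (measure_univ).symm
      _ = μ (E 0) (A 0 ∪ (A 0)ᶜ) := by rw [Set.union_compl_self]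
      _ ≤ μ (E 0) (A 0) + μ (E 0) ((A 0)ᶜ) := measure_union_le _ _
      _ = μ (E 0) (A 0) := by rw [hfull 0, add_zero]
  set S : Set Λ := A 0 \ A (π/3) with hS_def
  have hlow : (1:ℝ≥0∞) ≤ μ (E 0) S + ENNReal.ofReal ((1:ℝ)/4) := by
    refine h1.trans ?_
    calc μ (E 0) (A 0) ≤ μ (E 0) (S ∪ A (π/3)) :=
          measure_mono (Set.subset_diff_union _ _)
      _ ≤ μ (E 0) S + μ (E 0) (A (π/3)) := measure_union_le _ _
      _ ≤ μ (E 0) S + ENNReal.ofReal ((1:ℝ)/4) := add_le_add le_rfl q1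
  set c : ℝ≥0∞ := ENNReal.ofReal ((1:ℝ)/2) with hc_def
  have happly : ∀ (θ : ℝ) (T : Set Λ), μ ρ₀ T
      = c * μ (E θ) T + c * μ (E (θ + π/2)) T := by
    intro θ T
    rw [hν θ]
    simp [Measure.add_apply, Measure.smul_apply, smul_eq_mul]
  have hub1 : μ ρ₀ (A 0 \ A (π/6)) ≤ c * ENNReal.ofReal ((1:ℝ)/4) := by
    rw [happly (π/6)]
    have e1 : μ (E (π/6)) (A 0 \ A (π/6)) = 0 :=
      measure_mono_null (Set.diff_subset_compl _ _) (hfull (π/6))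
    rw [e1, mul_zero, zero_add]
    exact mul_le_mul_right ((measure_mono Set.diff_subset).trans q2) c
  have hub2 : μ ρ₀ (A (π/6) \ A (π/3)) ≤ c * ENNReal.ofReal ((1:ℝ)/4) := by
    rw [happly (π/3)]
    have e1 : μ (E (π/3)) (A (π/6) \ A (π/3)) = 0 :=
      measure_mono_null (Set.diff_subset_compl _ _) (hfull (π/3))
    rw [e1, mul_zero, zero_add]
    exact mul_le_mul_right ((measure_mono Set.diff_subset).trans q3) c
  have hsub : S ⊆ (A 0 \ A (π/6)) ∪ (A (π/6) \ A (π/3)) := by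
    rintro l ⟨h0, h3⟩
    by_cases h6 : l ∈ A (π/6)
    · exact Or.inr ⟨h6, h3⟩
    · exact Or.inl ⟨h0, h6⟩
  have key : c * μ (E 0) S ≤ c * ENNReal.ofReal ((1:ℝ)/2) := by
    calc c * μ (E 0) S ≤ c * μ (E 0) S + c * μ (E (0 + π/2)) S := le_self_add
      _ = μ ρ₀ S := (happly 0 S).symm
      _ ≤ μ ρ₀ ((A 0 \ A (π/6)) ∪ (A (π/6) \ A (π/3))) := measure_mono hsub
      _ ≤ μ ρ₀ (A 0 \ A (π/6)) + μ ρ₀ (A (π/6) \ A (π/3)) := measure_union_le _ _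
      _ ≤ c * ENNReal.ofReal ((1:ℝ)/4) + c * ENNReal.ofReal ((1:ℝ)/4) := add_le_add hub1 hub2
      _ = c * (ENNReal.ofReal ((1:ℝ)/4) + ENNReal.ofReal ((1:ℝ)/4)) := (mul_add _ _ _).symm
      _ = c * ENNReal.ofReal ((1:ℝ)/2) := by
          rw [← ENNReal.ofReal_add (by norm_num) (by norm_num)]
          norm_num
  have hc0 : c ≠ 0 := by
    rw [hc_def]
    simp only [ne_eq, ENNReal.ofReal_eq_zero, not_le]
    norm_num
  have hSle : μ (E 0) S ≤ ENNReal.ofReal ((1:ℝ)/2) :=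
    (ENNReal.mul_le_mul_iff_right hc0 ENNReal.ofReal_ne_top).mp key
  have hfin : (1:ℝ≥0∞) ≤ ENNReal.ofReal ((3:ℝ)/4) := by
    calc (1:ℝ≥0∞) ≤ μ (E 0) S + ENNReal.ofReal ((1:ℝ)/4) := hlow
      _ ≤ ENNReal.ofReal ((1:ℝ)/2) + ENNReal.ofReal ((1:ℝ)/4) := add_le_add hSle le_rfl
      _ = ENNReal.ofReal ((3:ℝ)/4) := by
          rw [← ENNReal.ofReal_add (by norm_num) (by norm_num)]
          norm_num
  rw [ENNReal.one_le_ofReal] at hfin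
  linarith
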